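/- Assume B satisfies (H_B), and let (a^l_{j,k})_{j,k≥1} be a symmetric nonnegative kernel with a^l_{j,k} ≤ A l (j+k) for some constants A > 0 and l ≥ 1. Let w^l be a mass-conserving solution on [0,∞) of the discrete collision-induced breakage equation with kernel a^l such that w^l ∈ L^∞_loc([0,∞); Y_m) for every m > 1. Let (μ_i)_{i≥1} be a nonnegative sequence such that (i^{−m} μ_i)_{i≥1} is bounded for some m ≥ 1. Then for every t ≥ 0 the series Σ_{i≥1} μ_i w_i^l(t) converges, the function t ↦ Σ_{i≥1} μ_i w_i^l(t) is differentiable on [0,∞), and d/dt Σ_{i≥1} μ_i w_i^l = (1/2) Σ_{j=1}^∞ Σ_{k=1}^∞ ( Σ_{i=1}^{j+k−1} μ_i B_{j,k}^i − μ_j − μ_k ) a^l_{j,k} w_j^l w_k^l, where the double series converges absolutely. -/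

import Mathlib

open MeasureTheory

/-- The moment of order `γ` of a sequence `y = (y_i)_{i ≥ 1}`. -/
noncomputable def mom (γ : ℝ) (y : ℕ → ℝ) : ℝ :=
  ∑' n : ℕ, ((n + 1 : ℕ) : ℝ) ^ γ * y (n + 1)

/-- Membership in the space `Y_γ`. -/
def inY (γ : ℝ) (y : ℕ → ℝ) : Prop :=
  Summable fun n : ℕ => ((n + 1 : ℕ) : ℝ) ^ γ * |y (n + 1)|

/-- The gain term `(1/2) Σ_{j=i+1}^∞ Σ_{k=1}^{j-1} B_{j-k,k}^i a_{j-k,k} w_{j-k} w_k`. -/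
noncomputable def gainT (a : ℕ → ℕ → ℝ) (B : ℕ → ℕ → ℕ → ℝ)
    (w : ℕ → ℝ → ℝ) (i : ℕ) (τ : ℝ) : ℝ :=
  (1 / 2) * ∑' n : ℕ, ∑ k ∈ Finset.Ico 1 (i + 1 + n),
    B (i + 1 + n - k) k i * a (i + 1 + n - k) k * w (i + 1 + n - k) τ * w k τ

/-- The loss term `Σ_{j=1}^∞ a_{i,j} w_i w_j`. -/
noncomputable def lossT (a : ℕ → ℕ → ℝ) (w : ℕ → ℝ → ℝ) (i : ℕ) (τ : ℝ) : ℝ :=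
  ∑' n : ℕ, a i (n + 1) * w i τ * w (n + 1) τ

/-- A solution on `[0,∞)` of the discrete collision-induced breakage equation with
kernel `a`, daughter distribution `B` and initial condition `win`. -/
def IsSol (a : ℕ → ℕ → ℝ) (B : ℕ → ℕ → ℕ → ℝ) (win : ℕ → ℝ)
    (w : ℕ → ℝ → ℝ) : Prop :=
  (∀ i, 1 ≤ i → ∀ t : ℝ, 0 ≤ t → 0 ≤ w i t) ∧
  (∀ i, 1 ≤ i → ContinuousOn (w i) (Set.Ici (0 : ℝ))) ∧
  (∀ i, 1 ≤ i → w i 0 = win i) ∧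
  (∀ i, 1 ≤ i → ∀ t : ℝ, 0 < t →
    IntegrableOn (lossT a w i) (Set.Ioc 0 t) ∧
    IntegrableOn (gainT a B w i) (Set.Ioc 0 t) ∧
    w i t = win i + ∫ τ in Set.Ioc (0 : ℝ) t, (gainT a B w i τ - lossT a w i τ))

/-- Mass conservation: `M_1(w(t)) = M_1(w^in)` for all `t ≥ 0`. -/
def MassConserving (win : ℕ → ℝ) (w : ℕ → ℝ → ℝ) : Prop :=
  ∀ t : ℝ, 0 ≤ t → inY 1 (fun i => w i t) ∧ mom 1 (fun i => w i t) = mom 1 win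

/-- Hypothesis (H_B) on the daughter distribution function. -/
def HB (B : ℕ → ℕ → ℕ → ℝ) : Prop :=
  ∀ j k : ℕ, 1 ≤ j → 1 ≤ k →
    (∀ i, 0 ≤ B j k i) ∧ (∀ i, B j k i = B k j i) ∧
    (∀ i, j + k ≤ i → B j k i = 0) ∧
    (∑ i ∈ Finset.Ico 1 (j + k), (i : ℝ) * B j k i = (j : ℝ) + (k : ℝ))

/-- Hypothesis (H_m): moment damping at every order `m > 1`. -/
def Hmom (B : ℕ → ℕ → ℕ → ℝ) : Prop :=
  ∀ m : ℝ, 1 < m → ∃ ε κ : ℝ, 0 < ε ∧ ε < 1 ∧ 1 ≤ κ ∧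
    ∀ j k : ℕ, 1 ≤ j → 1 ≤ k →
      ∑ i ∈ Finset.Ico 1 (j + k), (i : ℝ) ^ m * B j k i ≤
        (1 - ε) * ((j : ℝ) ^ m + (k : ℝ) ^ m) +
          κ * ((j : ℝ) * (k : ℝ) ^ (m - 1) + (j : ℝ) ^ (m - 1) * (k : ℝ))

/-- Hypothesis (H_2): at least two fragments in each collision. -/
def H2 (B : ℕ → ℕ → ℕ → ℝ) : Prop :=
  ∀ j k : ℕ, 1 ≤ j → 1 ≤ k → 2 ≤ ∑ i ∈ Finset.Ico 1 (j + k), B j k i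

/-- The collision kernel `a_{i,j} = A (i^α j^β + i^β j^α)`. -/
noncomputable def kerA (A α β : ℝ) (i j : ℕ) : ℝ :=
  A * ((i : ℝ) ^ α * (j : ℝ) ^ β + (i : ℝ) ^ β * (j : ℝ) ^ α)

/-- The truncated collision kernel
`a^l_{i,j} = A (min{i,l}^{α₊} i^{α-α₊} j^β + i^β min{j,l}^{α₊} j^{α-α₊})`. -/
noncomputable def kerTrunc (A α β : ℝ) (l : ℕ) (i j : ℕ) : ℝ :=
  A * (((min i l : ℕ) : ℝ) ^ max α 0 * (i : ℝ) ^ (α - max α 0) * (j : ℝ) ^ β +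
       (i : ℝ) ^ β * ((min j l : ℕ) : ℝ) ^ max α 0 * (j : ℝ) ^ (α - max α 0))

/-- The truncated initial condition `w^{in,l}`. -/
def winTrunc (l : ℕ) (win : ℕ → ℝ) (i : ℕ) : ℝ := if i ≤ l then win i else 0

/-- `w ∈ L^∞_loc([0,∞); Y_m)` for every `m > 1`. -/
def LocBddMoments (w : ℕ → ℝ → ℝ) : Prop :=
  ∀ m : ℝ, 1 < m → ∀ T : ℝ, 0 < T → ∃ C : ℝ,
    ∀ t ∈ Set.Icc (0 : ℝ) T, inY m (fun i => w i t) ∧ mom m (fun i => w i t) ≤ C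

/-- `sup_{t ∈ [0,T]} M_γ(w(t)) < ∞` for each `T > 0`. -/
def BddMoment (γ : ℝ) (w : ℕ → ℝ → ℝ) : Prop :=
  ∀ T : ℝ, 0 < T → ∃ C : ℝ,
    ∀ t ∈ Set.Icc (0 : ℝ) T, inY γ (fun i => w i t) ∧ mom γ (fun i => w i t) ≤ C

/-- A stationary solution of the discrete collision-induced breakage equation. -/
def IsStationaryCIB (a : ℕ → ℕ → ℝ) (B : ℕ → ℕ → ℕ → ℝ) (w : ℕ → ℝ) : Prop :=
  ∀ i, 1 ≤ i →
    Summable (fun n : ℕ => ∑ k ∈ Finset.Ico 1 (i + 1 + n),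
      B (i + 1 + n - k) k i * a (i + 1 + n - k) k * w (i + 1 + n - k) * w k) ∧
    Summable (fun n : ℕ => a i (n + 1) * w i * w (n + 1)) ∧
    (1 / 2) * (∑' n : ℕ, ∑ k ∈ Finset.Ico 1 (i + 1 + n),
        B (i + 1 + n - k) k i * a (i + 1 + n - k) k * w (i + 1 + n - k) * w k) =
      ∑' n : ℕ, a i (n + 1) * w i * w (n + 1)

open scoped ENNReal
open Finset

namespace Stmt9Aux

lemma summable_invsq : Summable (fun n : ℕ => (((n + 1 : ℕ) : ℝ) ^ (2:ℝ))⁻¹) := by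
  have h : Summable (fun n : ℕ => ((n : ℝ) ^ (2:ℝ))⁻¹) :=
    Real.summable_nat_rpow_inv.2 (by norm_num)
  exact (summable_nat_add_iff 1).2 h

lemma summable_invsq_pair : Summable (fun p : ℕ × ℕ =>
    (((p.1 + 1 : ℕ) : ℝ) ^ (2:ℝ))⁻¹ * (((p.2 + 1 : ℕ) : ℝ) ^ (2:ℝ))⁻¹) :=
  summable_invsq.mul_of_nonneg summable_invsq
    (fun n => by positivity) (fun n => by positivity)

lemma gain_reindex (i0 : ℕ) (H : ℕ → ℕ → ℝ≥0∞)
    (hvan : ∀ j k, 1 ≤ j → 1 ≤ k → j + k ≤ i0 → H j k = 0) :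
    ∑' n : ℕ, ∑ k ∈ Finset.Ico 1 (i0 + 1 + n), H (i0 + 1 + n - k) k
      = ∑' p : ℕ × ℕ, H (p.1 + 1) (p.2 + 1) := by
  classical
  set F : ℕ × ℕ → ℝ≥0∞ := fun q =>
    if q.2 < i0 + q.1 then H (i0 + q.1 - q.2) (q.2 + 1) else 0 with hF
  have hrow : ∀ n : ℕ, ∑ k ∈ Finset.Ico 1 (i0 + 1 + n), H (i0 + 1 + n - k) k
      = ∑' k' : ℕ, F (n, k') := by
    intro n
    rw [Finset.sum_Ico_eq_sum_range]
    have h1 : i0 + 1 + n - 1 = i0 + n := by omega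
    rw [h1]
    rw [tsum_eq_sum (s := Finset.range (i0 + n))
      (f := fun k' => F (n, k')) (by
        intro b hb
        simp only [Finset.mem_range, not_lt] at hb
        simp only [hF]
        rw [if_neg]; omega)]
    apply Finset.sum_congr rfl
    intro k' hk'
    simp only [Finset.mem_range] at hk'
    simp only [hF]
    rw [if_pos (by omega)]
    have e1 : i0 + 1 + n - (1 + k') = i0 + n - k' := by omega
    have e2 : 1 + k' = k' + 1 := by omega
    rw [e1, e2]
  calc ∑' n : ℕ, ∑ k ∈ Finset.Ico 1 (i0 + 1 + n), H (i0 + 1 + n - k) k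
      = ∑' n : ℕ, ∑' k' : ℕ, F (n, k') := by exact tsum_congr hrow
    _ = ∑' q : ℕ × ℕ, F q := by rw [ENNReal.tsum_prod']
    _ = ∑' p : ℕ × ℕ, H (p.1 + 1) (p.2 + 1) := by
        apply tsum_eq_tsum_of_ne_zero_bij
          (i := fun x => ((x : ℕ × ℕ).1 + 1 + (x : ℕ × ℕ).2 - i0, (x : ℕ × ℕ).2))
        · rintro ⟨⟨j1, k1⟩, hx⟩ ⟨⟨j2, k2⟩, hy⟩ hxy
          simp only [Function.mem_support] at hx hy
          have hx' : i0 ≤ j1 + k1 + 1 := by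
            by_contra hc
            exact hx (hvan (j1+1) (k1+1) (by omega) (by omega) (by omega))
          have hy' : i0 ≤ j2 + k2 + 1 := by
            by_contra hc
            exact hy (hvan (j2+1) (k2+1) (by omega) (by omega) (by omega))
          simp only [Prod.mk.injEq] at hxy
          obtain ⟨h1, h2⟩ := hxy
          apply Subtype.ext
          simp only [Prod.mk.injEq]
          exact ⟨by omega, h2⟩
        · rintro ⟨n, k'⟩ hq
          simp only [Function.mem_support, hF] at hq
          have hlt : k' < i0 + n := by
            by_contra hc
            rw [if_neg hc] at hq; exact hq rfl
          rw [if_pos hlt] at hq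
          refine ⟨⟨(i0 + n - k' - 1, k'), ?_⟩, ?_⟩
          · simp only [Function.mem_support]
            have : i0 + n - k' - 1 + 1 = i0 + n - k' := by omega
            rw [this]
            exact hq
          · have e3 : i0 + n - k' - 1 + 1 + k' - i0 = n := by omega
            simp only [e3]
        · rintro ⟨⟨j', k'⟩, hx⟩
          simp only [Function.mem_support] at hx
          have hx' : i0 ≤ j' + k' + 1 := by
            by_contra hc
            exact hx (hvan (j'+1) (k'+1) (by omega) (by omega) (by omega))
          simp only [hF]
          rw [if_pos (by omega)]
          congr 1
          omega

lemma gain_real (i0 : ℕ) (h : ℕ → ℕ → ℝ)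
    (hnn : ∀ j k, 1 ≤ j → 1 ≤ k → 0 ≤ h j k)
    (hvan : ∀ j k, 1 ≤ j → 1 ≤ k → j + k ≤ i0 → h j k = 0)
    (hsum : Summable fun p : ℕ × ℕ => h (p.1 + 1) (p.2 + 1)) :
    Summable (fun n : ℕ => ∑ k ∈ Finset.Ico 1 (i0 + 1 + n), h (i0 + 1 + n - k) k) ∧
    ∑' n : ℕ, (∑ k ∈ Finset.Ico 1 (i0 + 1 + n), h (i0 + 1 + n - k) k)
      = ∑' p : ℕ × ℕ, h (p.1 + 1) (p.2 + 1) := by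
  have key : ∑' n : ℕ, ∑ k ∈ Finset.Ico 1 (i0 + 1 + n),
        ENNReal.ofReal (h (i0 + 1 + n - k) k)
      = ∑' p : ℕ × ℕ, ENNReal.ofReal (h (p.1 + 1) (p.2 + 1)) :=
    gain_reindex i0 (fun j k => ENNReal.ofReal (h j k))
      (fun j k hj hk hjk => by rw [hvan j k hj hk hjk, ENNReal.ofReal_zero])
  have hsnn : ∀ n, ∀ k ∈ Finset.Ico 1 (i0 + 1 + n), 0 ≤ h (i0 + 1 + n - k) k := by
    intro n k hk
    simp only [Finset.mem_Ico] at hk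
    exact hnn _ _ (by omega) (by omega)
  have hrow : ∀ n : ℕ, ∑ k ∈ Finset.Ico 1 (i0 + 1 + n),
      ENNReal.ofReal (h (i0 + 1 + n - k) k)
      = ENNReal.ofReal (∑ k ∈ Finset.Ico 1 (i0 + 1 + n), h (i0 + 1 + n - k) k) := by
    intro n
    exact (ENNReal.ofReal_sum_of_nonneg (hsnn n)).symm
  have hrhs : ∑' p : ℕ × ℕ, ENNReal.ofReal (h (p.1 + 1) (p.2 + 1))
      = ENNReal.ofReal (∑' p : ℕ × ℕ, h (p.1 + 1) (p.2 + 1)) :=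
    (ENNReal.ofReal_tsum_of_nonneg (fun p => hnn _ _ (by omega) (by omega)) hsum).symm
  rw [tsum_congr hrow, hrhs] at key
  have hfin : ∑' n : ℕ, ENNReal.ofReal
      (∑ k ∈ Finset.Ico 1 (i0 + 1 + n), h (i0 + 1 + n - k) k) ≠ ⊤ := by
    rw [key]; exact ENNReal.ofReal_ne_top
  have hsum2 : Summable (fun n : ℕ =>
      ∑ k ∈ Finset.Ico 1 (i0 + 1 + n), h (i0 + 1 + n - k) k) := by
    have := ENNReal.summable_toReal hfin
    refine this.congr fun n => ?_
    rw [ENNReal.toReal_ofReal (Finset.sum_nonneg (hsnn n))]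
  refine ⟨hsum2, ?_⟩
  have h3 : ∑' n : ℕ, (∑ k ∈ Finset.Ico 1 (i0 + 1 + n), h (i0 + 1 + n - k) k)
      = (∑' n : ℕ, ENNReal.ofReal
          (∑ k ∈ Finset.Ico 1 (i0 + 1 + n), h (i0 + 1 + n - k) k)).toReal := by
    rw [ENNReal.tsum_toReal_eq (fun n => ENNReal.ofReal_ne_top)]
    exact tsum_congr fun n => (ENNReal.toReal_ofReal (Finset.sum_nonneg (hsnn n))).symm
  rw [h3, key, ENNReal.toReal_ofReal (tsum_nonneg fun p => hnn _ _ (by omega) (by omega))]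

lemma moment_bounds (w : ℕ → ℝ → ℝ) (hloc : LocBddMoments w)
    (hw0 : ∀ i, 1 ≤ i → ∀ s : ℝ, 0 ≤ s → 0 ≤ w i s)
    (T : ℝ) (hT : 0 < T) (q : ℝ) (hq : 1 < q) :
    ∃ C : ℝ, 0 ≤ C ∧ ∀ s ∈ Set.Icc (0:ℝ) T,
      (Summable fun n : ℕ => ((n + 1 : ℕ) : ℝ) ^ q * w (n + 1) s) ∧
      ∀ j : ℕ, 1 ≤ j → ((j : ℕ) : ℝ) ^ q * w j s ≤ C := by
  obtain ⟨C, hC⟩ := hloc q hq T hT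
  refine ⟨max C 0, le_max_right _ _, fun s hs => ?_⟩
  obtain ⟨hY, hM⟩ := hC s hs
  have hsum : Summable (fun n : ℕ => ((n + 1 : ℕ) : ℝ) ^ q * w (n + 1) s) :=
    hY.congr fun n => by
      rw [abs_of_nonneg (hw0 _ (by omega) s hs.1)]
  refine ⟨hsum, fun j hj => ?_⟩
  obtain ⟨j', rfl⟩ : ∃ j', j = j' + 1 := ⟨j - 1, by omega⟩
  calc ((j' + 1 : ℕ) : ℝ) ^ q * w (j' + 1) s
      ≤ ∑' n : ℕ, ((n + 1 : ℕ) : ℝ) ^ q * w (n + 1) s :=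
        Summable.le_tsum hsum j' (fun n _ => mul_nonneg (by positivity) (hw0 _ (by omega) s hs.1))
    _ = mom q (fun i => w i s) := rfl
    _ ≤ C := hM
    _ ≤ max C 0 := le_max_left _ _

lemma two_rpow_split {j k : ℕ} (hj : 1 ≤ j) (hk : 1 ≤ k) {r : ℝ} (hr : 0 ≤ r) :
    ((j : ℝ) + (k : ℝ)) ^ r ≤ 2 ^ r * ((j : ℝ) ^ r + (k : ℝ) ^ r) := by
  have hj0 : (0:ℝ) < j := by exact_mod_cast hj
  have hk0 : (0:ℝ) < k := by exact_mod_cast hk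
  rcases le_total (j : ℝ) (k : ℝ) with h | h
  · calc ((j : ℝ) + (k : ℝ)) ^ r ≤ (2 * (k : ℝ)) ^ r :=
          Real.rpow_le_rpow (by positivity) (by linarith) hr
      _ = 2 ^ r * (k : ℝ) ^ r := Real.mul_rpow (by norm_num) hk0.le
      _ ≤ 2 ^ r * ((j : ℝ) ^ r + (k : ℝ) ^ r) := by
          have : (0:ℝ) ≤ (j : ℝ) ^ r := by positivity
          have h2 : (0:ℝ) ≤ 2 ^ r := by positivity
          nlinarith
  · calc ((j : ℝ) + (k : ℝ)) ^ r ≤ (2 * (j : ℝ)) ^ r :=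
          Real.rpow_le_rpow (by positivity) (by linarith) hr
      _ = 2 ^ r * (j : ℝ) ^ r := Real.mul_rpow (by norm_num) hj0.le
      _ ≤ 2 ^ r * ((j : ℝ) ^ r + (k : ℝ) ^ r) := by
          have : (0:ℝ) ≤ (k : ℝ) ^ r := by positivity
          have h2 : (0:ℝ) ≤ 2 ^ r := by positivity
          nlinarith

lemma master (al : ℕ → ℕ → ℝ) (A l : ℝ) (hA : 0 < A) (hl : 1 ≤ l)
    (hal : ∀ i j, 1 ≤ i → 1 ≤ j → 0 ≤ al i j)
    (hbd : ∀ i j, 1 ≤ i → 1 ≤ j → al i j ≤ A * l * ((i : ℝ) + (j : ℝ)))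
    (w : ℕ → ℝ → ℝ) (hloc : LocBddMoments w)
    (hw0 : ∀ i, 1 ≤ i → ∀ s : ℝ, 0 ≤ s → 0 ≤ w i s)
    (T : ℝ) (hT : 0 < T) (r : ℝ) (hr : 0 ≤ r) :
    ∃ E : ℝ, 0 ≤ E ∧ ∀ s ∈ Set.Icc (0:ℝ) T, ∀ j k : ℕ, 1 ≤ j → 1 ≤ k →
      ((j : ℝ) + (k : ℝ)) ^ r * (al j k * w j s * w k s)
        ≤ E * (((j : ℝ) ^ (2:ℝ))⁻¹ * ((k : ℝ) ^ (2:ℝ))⁻¹) := by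
  obtain ⟨C1, hC10, hC1⟩ := moment_bounds w hloc hw0 T hT (r + 3) (by linarith)
  obtain ⟨C2, hC20, hC2⟩ := moment_bounds w hloc hw0 T hT 2 (by norm_num)
  refine ⟨A * l * 2 ^ (r + 1) * (2 * (C1 * C2)), by positivity, fun s hs j k hj hk => ?_⟩
  have hj0 : (0:ℝ) < j := by exact_mod_cast hj
  have hk0 : (0:ℝ) < k := by exact_mod_cast hk
  have hwj : 0 ≤ w j s := hw0 j hj s hs.1
  have hwk : 0 ≤ w k s := hw0 k hk s hs.1
  have hjk0 : (0:ℝ) < (j : ℝ) + (k : ℝ) := by linarith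
  have hrp : (0:ℝ) ≤ ((j : ℝ) + (k : ℝ)) ^ r := by positivity
  -- single index reductions
  have ej : ∀ ρ : ℝ, 0 ≤ ρ → (j:ℝ) ^ ρ * w j s * ((j:ℝ) ^ (2:ℝ))⁻¹
      ≤ C1 * ((j:ℝ) ^ (2:ℝ))⁻¹ → True := fun _ _ _ => trivial
  have key : ∀ (a b : ℕ), 1 ≤ a → 1 ≤ b →
      (a : ℝ) ^ (r+1) * w a s * w b s
        ≤ C1 * C2 * (((a : ℝ) ^ (2:ℝ))⁻¹ * ((b : ℝ) ^ (2:ℝ))⁻¹) := by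
    intro a b ha hb
    have ha0 : (0:ℝ) < a := by exact_mod_cast ha
    have hb0 : (0:ℝ) < b := by exact_mod_cast hb
    have hwa : 0 ≤ w a s := hw0 a ha s hs.1
    have hwb : 0 ≤ w b s := hw0 b hb s hs.1
    have e1 : (a:ℝ) ^ (r+3) = (a:ℝ) ^ (r+1) * (a:ℝ) ^ (2:ℝ) := by
      rw [← Real.rpow_add ha0]; ring_nf
    have ha2 : ((a:ℝ) ^ (2:ℝ)) ≠ 0 := by positivity
    have hb2 : ((b:ℝ) ^ (2:ℝ)) ≠ 0 := by positivity
    have e2 : (a : ℝ) ^ (r+1) * w a s * w b s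
        = ((a:ℝ) ^ (r+3) * w a s) * ((b:ℝ) ^ (2:ℝ) * w b s)
          * (((a : ℝ) ^ (2:ℝ))⁻¹ * ((b : ℝ) ^ (2:ℝ))⁻¹) := by
      rw [e1]; field_simp
    rw [e2]
    have h1 : (a:ℝ) ^ (r+3) * w a s ≤ C1 := (hC1 s hs).2 a ha
    have h2 : (b:ℝ) ^ (2:ℝ) * w b s ≤ C2 := (hC2 s hs).2 b hb
    have h3 : 0 ≤ (a:ℝ) ^ (r+3) * w a s := by positivity
    have h4 : 0 ≤ (b:ℝ) ^ (2:ℝ) * w b s := by positivity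
    have h5 : (0:ℝ) ≤ ((a : ℝ) ^ (2:ℝ))⁻¹ * ((b : ℝ) ^ (2:ℝ))⁻¹ := by positivity
    exact mul_le_mul_of_nonneg_right (mul_le_mul h1 h2 h4 hC10) h5
  calc ((j : ℝ) + (k : ℝ)) ^ r * (al j k * w j s * w k s)
      ≤ ((j : ℝ) + (k : ℝ)) ^ r * ((A * l * ((j : ℝ) + (k : ℝ))) * (w j s * w k s)) := by
        apply mul_le_mul_of_nonneg_left _ hrp
        have := hbd j k hj hk
        calc al j k * w j s * w k s = al j k * (w j s * w k s) := by ring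
          _ ≤ (A * l * ((j : ℝ) + (k : ℝ))) * (w j s * w k s) :=
              mul_le_mul_of_nonneg_right this (by positivity)
    _ = A * l * (((j : ℝ) + (k : ℝ)) ^ (r+1)) * (w j s * w k s) := by
        rw [Real.rpow_add hjk0, Real.rpow_one]; ring
    _ ≤ A * l * (2 ^ (r+1) * ((j : ℝ) ^ (r+1) + (k : ℝ) ^ (r+1))) * (w j s * w k s) := by
        apply mul_le_mul_of_nonneg_right _ (by positivity)
        exact mul_le_mul_of_nonneg_left (two_rpow_split hj hk (by linarith)) (by positivity)
    _ = A * l * 2 ^ (r+1) *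
        ((j:ℝ) ^ (r+1) * w j s * w k s + (k:ℝ) ^ (r+1) * w k s * w j s) := by ring
    _ ≤ A * l * 2 ^ (r+1) *
        (C1 * C2 * (((j : ℝ) ^ (2:ℝ))⁻¹ * ((k : ℝ) ^ (2:ℝ))⁻¹)
          + C1 * C2 * (((k : ℝ) ^ (2:ℝ))⁻¹ * ((j : ℝ) ^ (2:ℝ))⁻¹)) := by
        apply mul_le_mul_of_nonneg_left _ (by positivity)
        exact add_le_add (key j k hj hk) (key k j hk hj)
    _ = A * l * 2 ^ (r + 1) * (2 * (C1 * C2)) * (((j : ℝ) ^ (2:ℝ))⁻¹ * ((k : ℝ) ^ (2:ℝ))⁻¹) := by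
        ring

lemma SB_bound (B : ℕ → ℕ → ℕ → ℝ) (hB : HB B)
    (μ : ℕ → ℝ) (hμ : ∀ i, 1 ≤ i → 0 ≤ μ i)
    (m K : ℝ) (hm : 1 ≤ m) (hK0 : 0 ≤ K)
    (hK : ∀ i : ℕ, 1 ≤ i → μ i ≤ K * (i : ℝ) ^ m) :
    ∀ j k : ℕ, 1 ≤ j → 1 ≤ k →
      (0 ≤ ∑ i ∈ Finset.Ico 1 (j + k), μ i * B j k i) ∧
      (∑ i ∈ Finset.Ico 1 (j + k), μ i * B j k i ≤ K * ((j:ℝ) + (k:ℝ)) ^ m) := by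
  intro j k hj hk
  have hjk0 : (0:ℝ) < (j : ℝ) + (k : ℝ) := by
    have : (0:ℝ) < j := by exact_mod_cast hj
    have : (0:ℝ) < k := by exact_mod_cast hk
    linarith
  have hBnn := (hB j k hj hk).1
  constructor
  · apply Finset.sum_nonneg
    intro i hi
    simp only [Finset.mem_Ico] at hi
    exact mul_nonneg (hμ i hi.1) (hBnn i)
  · calc ∑ i ∈ Finset.Ico 1 (j + k), μ i * B j k i
        ≤ ∑ i ∈ Finset.Ico 1 (j + k), (K * ((j:ℝ) + (k:ℝ)) ^ (m - 1)) * ((i : ℝ) * B j k i) := by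
          apply Finset.sum_le_sum
          intro i hi
          simp only [Finset.mem_Ico] at hi
          have hi0 : (0:ℝ) < i := by exact_mod_cast hi.1
          have h1 : μ i ≤ K * (i : ℝ) ^ m := hK i hi.1
          have h2 : (i : ℝ) ^ m = (i : ℝ) ^ (1:ℝ) * (i : ℝ) ^ (m - 1) := by
            rw [← Real.rpow_add hi0]; ring_nf
          have h3 : (i : ℝ) ^ (m - 1) ≤ ((j:ℝ) + (k:ℝ)) ^ (m - 1) := by
            apply Real.rpow_le_rpow hi0.le _ (by linarith)
            have : (i : ℝ) < (j : ℝ) + (k : ℝ) := by exact_mod_cast hi.2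
            linarith
          calc μ i * B j k i ≤ (K * (i : ℝ) ^ m) * B j k i :=
                mul_le_mul_of_nonneg_right h1 (hBnn i)
            _ = (K * (i:ℝ) ^ (m-1)) * ((i : ℝ) * B j k i) := by
                rw [h2, Real.rpow_one]; ring
            _ ≤ (K * ((j:ℝ) + (k:ℝ)) ^ (m - 1)) * ((i : ℝ) * B j k i) := by
                apply mul_le_mul_of_nonneg_right _ (mul_nonneg hi0.le (hBnn i))
                exact mul_le_mul_of_nonneg_left h3 hK0
      _ = (K * ((j:ℝ) + (k:ℝ)) ^ (m - 1)) * ∑ i ∈ Finset.Ico 1 (j + k), (i : ℝ) * B j k i := by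
          rw [Finset.mul_sum]
      _ = K * ((j:ℝ) + (k:ℝ)) ^ m := by
          rw [(hB j k hj hk).2.2.2]
          have h5 : ((j:ℝ) + (k:ℝ)) ^ m = ((j:ℝ) + (k:ℝ)) ^ (m-1) * ((j:ℝ) + (k:ℝ)) ^ (1:ℝ) := by
            rw [← Real.rpow_add hjk0]; ring_nf
          rw [h5, Real.rpow_one]; ring

lemma pointwise_gain (B : ℕ → ℕ → ℕ → ℝ) (hB : HB B)
    (al : ℕ → ℕ → ℝ) (hal : ∀ i j, 1 ≤ i → 1 ≤ j → 0 ≤ al i j)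
    (μ : ℕ → ℝ) (hμ : ∀ i, 1 ≤ i → 0 ≤ μ i)
    (w : ℕ → ℝ → ℝ) (τ : ℝ) (hw : ∀ j, 1 ≤ j → 0 ≤ w j τ)
    (hQ1 : Summable fun p : ℕ × ℕ => (((p.1 + 1) + (p.2 + 1) : ℕ) : ℝ) *
      (al (p.1 + 1) (p.2 + 1) * w (p.1 + 1) τ * w (p.2 + 1) τ))
    (hP : Summable fun p : ℕ × ℕ =>
      (∑ i ∈ Finset.Ico 1 (p.1 + 1 + (p.2 + 1)), μ i * B (p.1 + 1) (p.2 + 1) i) *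
      (al (p.1 + 1) (p.2 + 1) * w (p.1 + 1) τ * w (p.2 + 1) τ)) :
    Summable (fun n : ℕ => μ (n + 1) * gainT al B w (n + 1) τ) ∧
    ∑' n : ℕ, μ (n + 1) * gainT al B w (n + 1) τ
      = (1/2) * ∑' p : ℕ × ℕ,
          (∑ i ∈ Finset.Ico 1 (p.1 + 1 + (p.2 + 1)), μ i * B (p.1 + 1) (p.2 + 1) i) *
          (al (p.1 + 1) (p.2 + 1) * w (p.1 + 1) τ * w (p.2 + 1) τ) := by
  classical
  set Q : ℕ × ℕ → ℝ := fun p => al (p.1 + 1) (p.2 + 1) * w (p.1 + 1) τ * w (p.2 + 1) τ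
    with hQdef
  have hQnn : ∀ p : ℕ × ℕ, 0 ≤ Q p := fun p =>
    mul_nonneg (mul_nonneg (hal _ _ (by omega) (by omega)) (hw _ (by omega))) (hw _ (by omega))
  have hBnn : ∀ j k i, 1 ≤ j → 1 ≤ k → 0 ≤ B j k i := fun j k i hj hk =>
    (hB j k hj hk).1 i
  have hBvan : ∀ j k i, 1 ≤ j → 1 ≤ k → j + k ≤ i → B j k i = 0 := fun j k i hj hk hi =>
    (hB j k hj hk).2.2.1 i hi
  have hBle : ∀ j k i, 1 ≤ j → 1 ≤ k → 1 ≤ i → B j k i ≤ (j : ℝ) + (k : ℝ) := by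
    intro j k i hj hk hi
    by_cases hik : i < j + k
    · have hmem : i ∈ Finset.Ico 1 (j + k) := Finset.mem_Ico.2 ⟨hi, hik⟩
      calc B j k i ≤ (i : ℝ) * B j k i := by
            nlinarith [hBnn j k i hj hk, (by exact_mod_cast hi : (1:ℝ) ≤ (i:ℝ))]
        _ ≤ ∑ i' ∈ Finset.Ico 1 (j + k), (i' : ℝ) * B j k i' := by
            apply Finset.single_le_sum (f := fun i' : ℕ => (i' : ℝ) * B j k i') _ hmem
            intro i' hi'
            simp only [Finset.mem_Ico] at hi'
            exact mul_nonneg (by positivity) (hBnn j k i' hj hk)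
        _ = (j : ℝ) + (k : ℝ) := (hB j k hj hk).2.2.2
    · rw [hBvan j k i hj hk (by omega)]
      positivity
  -- per-i0 rearrangement of the gain term
  have hper : ∀ i0 : ℕ, 1 ≤ i0 →
      gainT al B w i0 τ = (1/2) * ∑' p : ℕ × ℕ,
        B (p.1 + 1) (p.2 + 1) i0 * al (p.1 + 1) (p.2 + 1) * w (p.1 + 1) τ * w (p.2 + 1) τ := by
    intro i0 hi0
    have hg := gain_real i0 (fun j k => B j k i0 * al j k * w j τ * w k τ)
      (fun j k hj hk => by
        exact mul_nonneg (mul_nonneg (mul_nonneg (hBnn j k i0 hj hk)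
          (hal j k hj hk)) (hw j hj)) (hw k hk))
      (fun j k hj hk hjk => by rw [hBvan j k i0 hj hk hjk]; ring)
      (by
        apply Summable.of_nonneg_of_le _ _ hQ1
        · intro p
          exact mul_nonneg (mul_nonneg (mul_nonneg (hBnn _ _ i0 (by omega) (by omega))
            (hal _ _ (by omega) (by omega))) (hw _ (by omega))) (hw _ (by omega))
        · intro p
          have h1 : B (p.1 + 1) (p.2 + 1) i0 * al (p.1 + 1) (p.2 + 1) * w (p.1 + 1) τ * w (p.2 + 1) τ
              = B (p.1 + 1) (p.2 + 1) i0 * Q p := by rw [hQdef]; ring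
          rw [h1]
          have h2 : (((p.1 + 1) + (p.2 + 1) : ℕ) : ℝ) = ((p.1 + 1 : ℕ) : ℝ) + ((p.2 + 1 : ℕ) : ℝ) := by
            push_cast; ring
          rw [h2]
          exact mul_le_mul_of_nonneg_right
            (hBle (p.1 + 1) (p.2 + 1) i0 (by omega) (by omega) hi0) (hQnn p))
    rw [gainT, hg.2]
  -- triple sum machinery
  set f : ℕ × ℕ → ℕ → ℝ := fun p n => μ (n + 1) * (B (p.1 + 1) (p.2 + 1) (n + 1) * Q p)
    with hfdef
  have hfnn : ∀ p n, 0 ≤ f p n := fun p n =>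
    mul_nonneg (hμ _ (by omega)) (mul_nonneg (hBnn _ _ _ (by omega) (by omega)) (hQnn p))
  have hfib : ∀ p : ℕ × ℕ, ∑' n, f p n
      = (∑ i ∈ Finset.Ico 1 (p.1 + 1 + (p.2 + 1)), μ i * B (p.1 + 1) (p.2 + 1) i) * Q p := by
    intro p
    rw [tsum_eq_sum (s := Finset.range (p.1 + p.2 + 1)) (by
      intro b hb
      simp only [Finset.mem_range, not_lt] at hb
      simp only [hfdef]
      rw [hBvan _ _ _ (by omega) (by omega) (by omega)]; ring)]
    rw [Finset.sum_Ico_eq_sum_range]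
    have e0 : p.1 + 1 + (p.2 + 1) - 1 = p.1 + p.2 + 1 := by omega
    rw [e0, Finset.sum_mul]
    apply Finset.sum_congr rfl
    intro n hn
    simp only [hfdef]
    have e : 1 + n = n + 1 := by omega
    rw [e]; ring
  have hFs : Summable (Function.uncurry f) := by
    apply (summable_prod_of_nonneg (f := Function.uncurry f) (fun q => hfnn q.1 q.2)).2
    constructor
    · intro p
      apply summable_of_ne_finset_zero (s := Finset.range (p.1 + p.2 + 1))
      intro b hb
      simp only [Finset.mem_range, not_lt] at hb
      simp only [Function.uncurry, hfdef]
      rw [hBvan _ _ _ (by omega) (by omega) (by omega)]; ring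
    · exact hP.congr (fun p => (hfib p).symm)
  have hsum_n : Summable (fun n : ℕ => ∑' p : ℕ × ℕ, f p n) := by
    have h1 : Summable (fun q : ℕ × (ℕ × ℕ) => Function.uncurry f q.swap) := hFs.prod_symm
    have h2 := h1.prod
    exact h2.congr (fun n => tsum_congr fun p => by simp [Function.uncurry])
  have htar : ∀ n : ℕ, μ (n + 1) * gainT al B w (n + 1) τ = (1/2) * ∑' p, f p n := by
    intro n
    rw [hper (n + 1) (by omega)]
    have e1 : ∑' p : ℕ × ℕ, B (p.1 + 1) (p.2 + 1) (n + 1) * al (p.1 + 1) (p.2 + 1) *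
        w (p.1 + 1) τ * w (p.2 + 1) τ
        = ∑' p : ℕ × ℕ, B (p.1 + 1) (p.2 + 1) (n + 1) * Q p :=
      tsum_congr (fun p => by rw [hQdef]; ring)
    rw [e1]
    simp only [hfdef]
    rw [tsum_mul_left (a := μ (n + 1))]
    ring
  constructor
  · exact (hsum_n.mul_left (1/2)).congr (fun n => (htar n).symm)
  · rw [tsum_congr htar, tsum_mul_left]
    congr 1
    rw [Summable.tsum_comm (f := f) hFs]
    exact tsum_congr hfib

lemma pointwise_loss (al : ℕ → ℕ → ℝ)
    (hsym : ∀ i j, 1 ≤ i → 1 ≤ j → al i j = al j i)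
    (μ : ℕ → ℝ) (w : ℕ → ℝ → ℝ) (τ : ℝ)
    (hμQ : Summable fun p : ℕ × ℕ =>
      μ (p.1 + 1) * (al (p.1 + 1) (p.2 + 1) * w (p.1 + 1) τ * w (p.2 + 1) τ)) :
    Summable (fun n : ℕ => μ (n + 1) * lossT al w (n + 1) τ) ∧
    ∑' n : ℕ, μ (n + 1) * lossT al w (n + 1) τ
      = (1/2) * ∑' p : ℕ × ℕ, (μ (p.1 + 1) + μ (p.2 + 1)) *
          (al (p.1 + 1) (p.2 + 1) * w (p.1 + 1) τ * w (p.2 + 1) τ) := by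
  classical
  set Q : ℕ × ℕ → ℝ := fun p => al (p.1 + 1) (p.2 + 1) * w (p.1 + 1) τ * w (p.2 + 1) τ
    with hQdef
  set L : ℕ × ℕ → ℝ := fun p => μ (p.1 + 1) * Q p with hLdef
  have hrow : ∀ n : ℕ, μ (n + 1) * lossT al w (n + 1) τ = ∑' b : ℕ, L (n, b) := by
    intro n
    rw [lossT, ← tsum_mul_left]
  have hQswap : ∀ p : ℕ × ℕ, Q (p.2, p.1) = Q p := by
    intro p
    simp only [hQdef]
    rw [hsym (p.2 + 1) (p.1 + 1) (by omega) (by omega)]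
    ring
  have hμQ2 : Summable (fun p : ℕ × ℕ => μ (p.2 + 1) * Q p) := by
    have h1 : Summable (fun p : ℕ × ℕ => L ((Equiv.prodComm ℕ ℕ) p)) :=
      (Equiv.prodComm ℕ ℕ).summable_iff.2 hμQ
    exact h1.congr (fun p => by
      simp only [hLdef, Equiv.prodComm_apply, Prod.fst_swap, Prod.snd_swap, Prod.swap]
      rw [hQswap p])
  have hswap : ∑' p : ℕ × ℕ, μ (p.2 + 1) * Q p = ∑' p : ℕ × ℕ, L p := by
    rw [← (Equiv.prodComm ℕ ℕ).tsum_eq L]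
    exact tsum_congr (fun p => by
      simp only [hLdef, Equiv.prodComm_apply, Prod.fst_swap, Prod.snd_swap, Prod.swap]
      rw [hQswap p])
  constructor
  · exact hμQ.prod.congr (fun n => (hrow n).symm)
  · rw [tsum_congr hrow, ← Summable.tsum_prod hμQ]
    have hsplit : ∑' p : ℕ × ℕ, (μ (p.1 + 1) + μ (p.2 + 1)) * Q p
        = ∑' p : ℕ × ℕ, (μ (p.1 + 1) * Q p + μ (p.2 + 1) * Q p) :=
      tsum_congr (fun p => by ring)
    rw [hsplit, Summable.tsum_add hμQ hμQ2, hswap]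
    simp only [hLdef]
    ring

noncomputable def SBf (B : ℕ → ℕ → ℕ → ℝ) (μ : ℕ → ℝ) : ℕ × ℕ → ℝ := fun p =>
  ∑ i ∈ Finset.Ico 1 (p.1 + 1 + (p.2 + 1)), μ i * B (p.1 + 1) (p.2 + 1) i

noncomputable def Qf (al : ℕ → ℕ → ℝ) (w : ℕ → ℝ → ℝ) : ℕ × ℕ → ℝ → ℝ := fun p s =>
  al (p.1 + 1) (p.2 + 1) * w (p.1 + 1) s * w (p.2 + 1) s

noncomputable def IV : ℕ × ℕ → ℝ := fun p =>
  (((p.1 + 1 : ℕ) : ℝ) ^ (2:ℝ))⁻¹ * (((p.2 + 1 : ℕ) : ℝ) ^ (2:ℝ))⁻¹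

lemma IV_nonneg (p : ℕ × ℕ) : 0 ≤ IV p := by unfold IV; positivity

lemma PACK (B : ℕ → ℕ → ℕ → ℝ) (hB : HB B)
    (al : ℕ → ℕ → ℝ) (A l : ℝ) (hA : 0 < A) (hl : 1 ≤ l)
    (hal : ∀ i j, 1 ≤ i → 1 ≤ j → 0 ≤ al i j)
    (hbd : ∀ i j, 1 ≤ i → 1 ≤ j → al i j ≤ A * l * ((i : ℝ) + (j : ℝ)))
    (w : ℕ → ℝ → ℝ) (hloc : LocBddMoments w)
    (hw0 : ∀ i, 1 ≤ i → ∀ s : ℝ, 0 ≤ s → 0 ≤ w i s)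
    (μ : ℕ → ℝ) (hμ : ∀ i, 1 ≤ i → 0 ≤ μ i)
    (m K : ℝ) (hm1 : 1 ≤ m) (hK0 : 0 ≤ K)
    (hK : ∀ i : ℕ, 1 ≤ i → μ i ≤ K * (i : ℝ) ^ m)
    (T : ℝ) (hT : 0 < T) :
    ∃ D : ℝ, 0 ≤ D ∧ ∀ s ∈ Set.Icc (0:ℝ) T,
      (∀ p : ℕ × ℕ, 0 ≤ Qf al w p s) ∧
      (∀ p : ℕ × ℕ, (((p.1 + 1) + (p.2 + 1) : ℕ) : ℝ) * Qf al w p s ≤ D * IV p) ∧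
      (∀ p : ℕ × ℕ, SBf B μ p * Qf al w p s ≤ D * IV p) ∧
      (∀ p : ℕ × ℕ, (μ (p.1 + 1) + μ (p.2 + 1)) * Qf al w p s ≤ D * IV p) ∧
      (∀ p : ℕ × ℕ, μ (p.1 + 1) * Qf al w p s ≤ D * IV p) ∧
      (∀ n : ℕ, 0 ≤ μ (n + 1) * w (n + 1) s ∧
        μ (n + 1) * w (n + 1) s ≤ D * (((n + 1 : ℕ) : ℝ) ^ (2:ℝ))⁻¹) := by
  obtain ⟨E1, hE10, hE1⟩ := master al A l hA hl hal hbd w hloc hw0 T hT 1 zero_le_one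
  obtain ⟨Em, hEm0, hEm⟩ := master al A l hA hl hal hbd w hloc hw0 T hT m (by linarith)
  obtain ⟨Cm2, hCm20, hCm2⟩ := moment_bounds w hloc hw0 T hT (m + 2) (by linarith)
  refine ⟨E1 + K * Em + 2 * K * Em + K * Cm2, by positivity, fun s hs => ?_⟩
  have hD0 : (0:ℝ) ≤ E1 + K * Em + 2 * K * Em + K * Cm2 := by positivity
  have hp1 : (0:ℝ) ≤ K * Em := by positivity
  have hp2 : (0:ℝ) ≤ K * Cm2 := by positivity
  have hp3 : (0:ℝ) ≤ 2 * K * Em := by positivity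
  have hQnn : ∀ p : ℕ × ℕ, 0 ≤ Qf al w p s := by
    intro p
    exact mul_nonneg (mul_nonneg (hal _ _ (by omega) (by omega))
      (hw0 _ (by omega) s hs.1)) (hw0 _ (by omega) s hs.1)
  have hmono : ∀ c : ℝ, c ≤ E1 + K * Em + 2 * K * Em + K * Cm2 →
      ∀ x y : ℝ, 0 ≤ x → y ≤ c * x → y ≤ (E1 + K * Em + 2 * K * Em + K * Cm2) * x := by
    intro c hc x y hx hy
    exact hy.trans (mul_le_mul_of_nonneg_right hc hx)
  -- the main (j+k)^m bound
  have hmQ : ∀ p : ℕ × ℕ, (((p.1+1:ℕ):ℝ) + ((p.2+1:ℕ):ℝ)) ^ m * Qf al w p s ≤ Em * IV p := by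
    intro p
    have h := hEm s hs (p.1 + 1) (p.2 + 1) (by omega) (by omega)
    simpa [Qf, IV, mul_assoc] using h
  have hjmQ : ∀ p : ℕ × ℕ, ((p.1 + 1 : ℕ) : ℝ) ^ m * Qf al w p s ≤ Em * IV p := by
    intro p
    refine le_trans ?_ (hmQ p)
    apply mul_le_mul_of_nonneg_right _ (hQnn p)
    apply Real.rpow_le_rpow (by positivity) _ (by linarith)
    have : (0:ℝ) ≤ ((p.2+1:ℕ):ℝ) := by positivity
    linarith
  have hkmQ : ∀ p : ℕ × ℕ, ((p.2 + 1 : ℕ) : ℝ) ^ m * Qf al w p s ≤ Em * IV p := by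
    intro p
    refine le_trans ?_ (hmQ p)
    apply mul_le_mul_of_nonneg_right _ (hQnn p)
    apply Real.rpow_le_rpow (by positivity) _ (by linarith)
    have : (0:ℝ) ≤ ((p.1+1:ℕ):ℝ) := by positivity
    linarith
  have hμj : ∀ j : ℕ, 1 ≤ j → 0 ≤ μ j ∧ μ j ≤ K * (j:ℝ) ^ m := fun j hj => ⟨hμ j hj, hK j hj⟩
  refine ⟨hQnn, ?_, ?_, ?_, ?_, ?_⟩
  · intro p
    have h := hE1 s hs (p.1 + 1) (p.2 + 1) (by omega) (by omega)
    rw [Real.rpow_one] at h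
    apply hmono E1 (by linarith) _ _ (IV_nonneg p)
    have e : (((p.1 + 1) + (p.2 + 1) : ℕ) : ℝ) = ((p.1+1:ℕ):ℝ) + ((p.2+1:ℕ):ℝ) := by
      push_cast; ring
    rw [e]
    simpa [Qf, IV, mul_assoc] using h
  · intro p
    apply hmono (K * Em) (by linarith) _ _ (IV_nonneg p)
    have hSB := SB_bound B hB μ hμ m K hm1 hK0 hK (p.1 + 1) (p.2 + 1) (by omega) (by omega)
    have e : ((p.1 + 1 : ℕ):ℝ) + ((p.2 + 1:ℕ):ℝ) = ((p.1 + 1 + (p.2+1) : ℕ) : ℝ) := by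
      push_cast; ring
    calc SBf B μ p * Qf al w p s
        ≤ (K * (((p.1+1:ℕ):ℝ) + ((p.2+1:ℕ):ℝ)) ^ m) * Qf al w p s := by
          apply mul_le_mul_of_nonneg_right _ (hQnn p)
          exact hSB.2
      _ = K * ((((p.1+1:ℕ):ℝ) + ((p.2+1:ℕ):ℝ)) ^ m * Qf al w p s) := by ring
      _ ≤ K * (Em * IV p) := mul_le_mul_of_nonneg_left (hmQ p) hK0
      _ = (K * Em) * IV p := by ring
  · intro p
    apply hmono (2 * K * Em) (by linarith) _ _ (IV_nonneg p)
    calc (μ (p.1 + 1) + μ (p.2 + 1)) * Qf al w p s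
        = μ (p.1+1) * Qf al w p s + μ (p.2+1) * Qf al w p s := by ring
      _ ≤ (K * ((p.1+1:ℕ):ℝ) ^ m) * Qf al w p s + (K * ((p.2+1:ℕ):ℝ) ^ m) * Qf al w p s := by
          apply add_le_add <;>
            exact mul_le_mul_of_nonneg_right (hK _ (by omega)) (hQnn p)
      _ = K * (((p.1+1:ℕ):ℝ) ^ m * Qf al w p s) + K * (((p.2+1:ℕ):ℝ) ^ m * Qf al w p s) := by
          ring
      _ ≤ K * (Em * IV p) + K * (Em * IV p) :=
          add_le_add (mul_le_mul_of_nonneg_left (hjmQ p) hK0)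
            (mul_le_mul_of_nonneg_left (hkmQ p) hK0)
      _ = (2 * K * Em) * IV p := by ring
  · intro p
    apply hmono (K * Em) (by linarith) _ _ (IV_nonneg p)
    calc μ (p.1 + 1) * Qf al w p s
        ≤ (K * ((p.1+1:ℕ):ℝ) ^ m) * Qf al w p s :=
          mul_le_mul_of_nonneg_right (hK _ (by omega)) (hQnn p)
      _ = K * (((p.1+1:ℕ):ℝ) ^ m * Qf al w p s) := by ring
      _ ≤ K * (Em * IV p) := mul_le_mul_of_nonneg_left (hjmQ p) hK0
      _ = (K * Em) * IV p := by ring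
  · intro n
    have hwn : 0 ≤ w (n + 1) s := hw0 _ (by omega) s hs.1
    have hμn : 0 ≤ μ (n + 1) := hμ _ (by omega)
    refine ⟨mul_nonneg hμn hwn, ?_⟩
    apply hmono (K * Cm2) (by linarith) _ _ (by positivity)
    have hn0 : (0:ℝ) < ((n+1:ℕ):ℝ) := by positivity
    have e1 : ((n+1:ℕ):ℝ) ^ (m + 2) = ((n+1:ℕ):ℝ) ^ m * ((n+1:ℕ):ℝ) ^ (2:ℝ) := by
      rw [← Real.rpow_add hn0]
    have h2 : ((n+1:ℕ):ℝ) ^ (m+2) * w (n+1) s ≤ Cm2 := (hCm2 s hs).2 (n+1) (by omega)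
    have e2 : ((n+1:ℕ):ℝ) ^ m * w (n + 1) s
        = (((n+1:ℕ):ℝ) ^ (m+2) * w (n+1) s) * (((n+1:ℕ):ℝ) ^ (2:ℝ))⁻¹ := by
      rw [e1]
      have : ((n+1:ℕ):ℝ) ^ (2:ℝ) ≠ 0 := by positivity
      field_simp
    calc μ (n + 1) * w (n + 1) s
        ≤ (K * ((n+1:ℕ):ℝ) ^ m) * w (n + 1) s :=
          mul_le_mul_of_nonneg_right (hK _ (by omega)) hwn
      _ = K * (((n+1:ℕ):ℝ) ^ m * w (n + 1) s) := by ring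
      _ = K * ((((n+1:ℕ):ℝ) ^ (m+2) * w (n+1) s) * (((n+1:ℕ):ℝ) ^ (2:ℝ))⁻¹) := by rw [e2]
      _ ≤ K * (Cm2 * (((n+1:ℕ):ℝ) ^ (2:ℝ))⁻¹) := by
          apply mul_le_mul_of_nonneg_left _ hK0
          exact mul_le_mul_of_nonneg_right h2 (by positivity)
      _ = (K * Cm2) * (((n+1:ℕ):ℝ) ^ (2:ℝ))⁻¹ := by ring

noncomputable def Gpf (B : ℕ → ℕ → ℕ → ℝ) (al : ℕ → ℕ → ℝ) (μ : ℕ → ℝ)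
    (w : ℕ → ℝ → ℝ) : ℝ → ℝ := fun s => (1/2) * ∑' p : ℕ × ℕ, SBf B μ p * Qf al w p s

noncomputable def Gmf (al : ℕ → ℕ → ℝ) (μ : ℕ → ℝ) (w : ℕ → ℝ → ℝ) : ℝ → ℝ := fun s =>
  (1/2) * ∑' p : ℕ × ℕ, (μ (p.1 + 1) + μ (p.2 + 1)) * Qf al w p s

noncomputable def Gdf (B : ℕ → ℕ → ℕ → ℝ) (al : ℕ → ℕ → ℝ) (μ : ℕ → ℝ)
    (w : ℕ → ℝ → ℝ) : ℝ → ℝ := fun s =>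
  (1/2) * ∑' p : ℕ × ℕ,
    ((∑ i ∈ Finset.Ico 1 (p.1 + 1 + (p.2 + 1)), μ i * B (p.1 + 1) (p.2 + 1) i) -
        μ (p.1 + 1) - μ (p.2 + 1)) * al (p.1 + 1) (p.2 + 1) *
      w (p.1 + 1) s * w (p.2 + 1) s

lemma PER (B : ℕ → ℕ → ℕ → ℝ) (hB : HB B)
    (al : ℕ → ℕ → ℝ) (A l : ℝ) (hA : 0 < A) (hl : 1 ≤ l)
    (hsym : ∀ i j, 1 ≤ i → 1 ≤ j → al i j = al j i)
    (hal : ∀ i j, 1 ≤ i → 1 ≤ j → 0 ≤ al i j)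
    (hbd : ∀ i j, 1 ≤ i → 1 ≤ j → al i j ≤ A * l * ((i : ℝ) + (j : ℝ)))
    (w : ℕ → ℝ → ℝ) (hloc : LocBddMoments w)
    (hw0 : ∀ i, 1 ≤ i → ∀ s : ℝ, 0 ≤ s → 0 ≤ w i s)
    (μ : ℕ → ℝ) (hμ : ∀ i, 1 ≤ i → 0 ≤ μ i)
    (m K : ℝ) (hm1 : 1 ≤ m) (hK0 : 0 ≤ K)
    (hK : ∀ i : ℕ, 1 ≤ i → μ i ≤ K * (i : ℝ) ^ m)
    (T : ℝ) (hT : 0 < T) :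
    ∃ D : ℝ, 0 ≤ D ∧ ∀ s ∈ Set.Icc (0:ℝ) T,
      (Summable fun n : ℕ => μ (n + 1) * w (n + 1) s) ∧
      (Summable fun p : ℕ × ℕ =>
        |((∑ i ∈ Finset.Ico 1 (p.1 + 1 + (p.2 + 1)), μ i * B (p.1 + 1) (p.2 + 1) i) -
            μ (p.1 + 1) - μ (p.2 + 1)) * al (p.1 + 1) (p.2 + 1) *
          w (p.1 + 1) s * w (p.2 + 1) s|) ∧
      (Summable fun n : ℕ => μ (n + 1) * gainT al B w (n + 1) s) ∧
      (∑' n : ℕ, μ (n + 1) * gainT al B w (n + 1) s = Gpf B al μ w s) ∧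
      (Summable fun n : ℕ => μ (n + 1) * lossT al w (n + 1) s) ∧
      (∑' n : ℕ, μ (n + 1) * lossT al w (n + 1) s = Gmf al μ w s) ∧
      (Gdf B al μ w s = Gpf B al μ w s - Gmf al μ w s) ∧
      (0 ≤ Gpf B al μ w s) ∧ (Gpf B al μ w s ≤ D) ∧
      (0 ≤ Gmf al μ w s) ∧ (Gmf al μ w s ≤ D) ∧
      (∀ p : ℕ × ℕ, |SBf B μ p * Qf al w p s| ≤ D * IV p) ∧
      (∀ p : ℕ × ℕ, |(μ (p.1 + 1) + μ (p.2 + 1)) * Qf al w p s| ≤ D * IV p) := by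
  obtain ⟨D0, hD00, hP0⟩ := PACK B hB al A l hA hl hal hbd w hloc hw0 μ hμ m K hm1 hK0 hK T hT
  have hIVsum : Summable (fun p : ℕ × ℕ => D0 * IV p) := by
    apply Summable.mul_left
    exact summable_invsq_pair
  refine ⟨D0 + 2 * (D0 + D0 * ∑' p : ℕ × ℕ, IV p) + D0 * ∑' p : ℕ × ℕ, IV p, ?_, fun s hs => ?_⟩
  · have h0 : (0:ℝ) ≤ ∑' p : ℕ × ℕ, IV p := tsum_nonneg IV_nonneg
    positivity
  obtain ⟨hQnn, h1, hSBQ, hμμQ, hμQ, hμw⟩ := hP0 s hs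
  have htsIV : (0:ℝ) ≤ ∑' p : ℕ × ℕ, IV p := tsum_nonneg IV_nonneg
  set D : ℝ := D0 + 2 * (D0 + D0 * ∑' p : ℕ × ℕ, IV p) + D0 * ∑' p : ℕ × ℕ, IV p with hD
  have hD0' : 0 ≤ D := by rw [hD]; positivity
  have hSBnn : ∀ p : ℕ × ℕ, 0 ≤ SBf B μ p := fun p =>
    (SB_bound B hB μ hμ m K hm1 hK0 hK (p.1+1) (p.2+1) (by omega) (by omega)).1
  have hμnn : ∀ p : ℕ × ℕ, 0 ≤ μ (p.1 + 1) + μ (p.2 + 1) := fun p =>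
    add_nonneg (hμ _ (by omega)) (hμ _ (by omega))
  -- summabilities
  have sQ1 : Summable (fun p : ℕ × ℕ => (((p.1 + 1) + (p.2 + 1) : ℕ) : ℝ) * Qf al w p s) :=
    Summable.of_nonneg_of_le (fun p => mul_nonneg (by positivity) (hQnn p)) (fun p => h1 p)
      hIVsum
  have sSBQ : Summable (fun p : ℕ × ℕ => SBf B μ p * Qf al w p s) :=
    Summable.of_nonneg_of_le (fun p => mul_nonneg (hSBnn p) (hQnn p)) (fun p => hSBQ p) hIVsum
  have sμμQ : Summable (fun p : ℕ × ℕ => (μ (p.1 + 1) + μ (p.2 + 1)) * Qf al w p s) :=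
    Summable.of_nonneg_of_le (fun p => mul_nonneg (hμnn p) (hQnn p)) (fun p => hμμQ p) hIVsum
  have sμQ : Summable (fun p : ℕ × ℕ => μ (p.1 + 1) * Qf al w p s) :=
    Summable.of_nonneg_of_le (fun p => mul_nonneg (hμ _ (by omega)) (hQnn p))
      (fun p => hμQ p) hIVsum
  have hw' : ∀ j, 1 ≤ j → 0 ≤ w j s := fun j hj => hw0 j hj s hs.1
  -- gain and loss identities
  have hg := pointwise_gain B hB al hal μ hμ w s hw'
    (sQ1.congr (fun p => by simp only [Qf]))
    (sSBQ.congr (fun p => by simp only [Qf, SBf]))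
  have hlo := pointwise_loss al hsym μ w s (sμQ.congr (fun p => by simp only [Qf]))
  refine ⟨?_, ?_, hg.1, ?_, hlo.1, ?_, ?_, ?_, ?_, ?_, ?_, ?_, ?_⟩
  · -- Summable μ w
    exact Summable.of_nonneg_of_le (fun n => (hμw n).1) (fun n => (hμw n).2)
      (summable_invsq.mul_left D0)
  · -- Summable abs
    apply Summable.of_nonneg_of_le (fun p => abs_nonneg _) _ (hIVsum.add hIVsum)
    intro p
    have e : ((∑ i ∈ Finset.Ico 1 (p.1 + 1 + (p.2 + 1)), μ i * B (p.1 + 1) (p.2 + 1) i) -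
          μ (p.1 + 1) - μ (p.2 + 1)) * al (p.1 + 1) (p.2 + 1) *
        w (p.1 + 1) s * w (p.2 + 1) s
        = (SBf B μ p - μ (p.1 + 1) - μ (p.2 + 1)) * Qf al w p s := by
      simp only [SBf, Qf]; ring
    rw [e, abs_mul, abs_of_nonneg (hQnn p)]
    have habs : |SBf B μ p - μ (p.1 + 1) - μ (p.2 + 1)|
        ≤ SBf B μ p + (μ (p.1 + 1) + μ (p.2 + 1)) := by
      rw [abs_le]
      constructor
      · have := hSBnn p
        have h2 := hμ (p.1+1) (by omega)
        have h3 := hμ (p.2+1) (by omega)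
        linarith
      · have h2 := hμ (p.1+1) (by omega)
        have h3 := hμ (p.2+1) (by omega)
        linarith
    calc |SBf B μ p - μ (p.1 + 1) - μ (p.2 + 1)| * Qf al w p s
        ≤ (SBf B μ p + (μ (p.1 + 1) + μ (p.2 + 1))) * Qf al w p s :=
          mul_le_mul_of_nonneg_right habs (hQnn p)
      _ = SBf B μ p * Qf al w p s + (μ (p.1 + 1) + μ (p.2 + 1)) * Qf al w p s := by ring
      _ ≤ D0 * IV p + D0 * IV p := add_le_add (hSBQ p) (hμμQ p)
  · -- gain tsum identity
    rw [hg.2]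
    simp only [Gpf, SBf, Qf]
  · -- loss tsum identity
    rw [hlo.2]
    simp only [Gmf, Qf]
  · -- Gdf = Gpf - Gmf
    simp only [Gdf, Gpf, Gmf]
    have e : ∀ p : ℕ × ℕ,
        ((∑ i ∈ Finset.Ico 1 (p.1 + 1 + (p.2 + 1)), μ i * B (p.1 + 1) (p.2 + 1) i) -
            μ (p.1 + 1) - μ (p.2 + 1)) * al (p.1 + 1) (p.2 + 1) *
          w (p.1 + 1) s * w (p.2 + 1) s
        = SBf B μ p * Qf al w p s - (μ (p.1 + 1) + μ (p.2 + 1)) * Qf al w p s := by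
      intro p; simp only [SBf, Qf]; ring
    rw [tsum_congr e, Summable.tsum_sub sSBQ sμμQ]
    ring
  · -- 0 ≤ Gpf
    simp only [Gpf]
    have : 0 ≤ ∑' p : ℕ × ℕ, SBf B μ p * Qf al w p s :=
      tsum_nonneg (fun p => mul_nonneg (hSBnn p) (hQnn p))
    linarith
  · -- Gpf ≤ D
    simp only [Gpf]
    have h2 : ∑' p : ℕ × ℕ, SBf B μ p * Qf al w p s ≤ ∑' p : ℕ × ℕ, D0 * IV p :=
      Summable.tsum_le_tsum (fun p => hSBQ p) sSBQ hIVsum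
    rw [tsum_mul_left] at h2
    have h3 : (0:ℝ) ≤ D0 * ∑' p : ℕ × ℕ, IV p := by positivity
    rw [hD]
    nlinarith
  · -- 0 ≤ Gmf
    simp only [Gmf]
    have : 0 ≤ ∑' p : ℕ × ℕ, (μ (p.1 + 1) + μ (p.2 + 1)) * Qf al w p s :=
      tsum_nonneg (fun p => mul_nonneg (hμnn p) (hQnn p))
    linarith
  · -- Gmf ≤ D
    simp only [Gmf]
    have h2 : ∑' p : ℕ × ℕ, (μ (p.1 + 1) + μ (p.2 + 1)) * Qf al w p s
        ≤ ∑' p : ℕ × ℕ, D0 * IV p :=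
      Summable.tsum_le_tsum (fun p => hμμQ p) sμμQ hIVsum
    rw [tsum_mul_left] at h2
    have h3 : (0:ℝ) ≤ D0 * ∑' p : ℕ × ℕ, IV p := by positivity
    rw [hD]
    nlinarith
  · -- unif bound SB*Q
    intro p
    rw [abs_of_nonneg (mul_nonneg (hSBnn p) (hQnn p))]
    refine (hSBQ p).trans (mul_le_mul_of_nonneg_right ?_ (IV_nonneg p))
    rw [hD]; nlinarith
  · -- unif bound (μ+μ)*Q
    intro p
    rw [abs_of_nonneg (mul_nonneg (hμnn p) (hQnn p))]
    refine (hμμQ p).trans (mul_le_mul_of_nonneg_right ?_ (IV_nonneg p))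
    rw [hD]; nlinarith

lemma CONT2 (B : ℕ → ℕ → ℕ → ℝ) (hB : HB B)
    (al : ℕ → ℕ → ℝ) (A l : ℝ) (hA : 0 < A) (hl : 1 ≤ l)
    (hsym : ∀ i j, 1 ≤ i → 1 ≤ j → al i j = al j i)
    (hal : ∀ i j, 1 ≤ i → 1 ≤ j → 0 ≤ al i j)
    (hbd : ∀ i j, 1 ≤ i → 1 ≤ j → al i j ≤ A * l * ((i : ℝ) + (j : ℝ)))
    (w : ℕ → ℝ → ℝ) (hloc : LocBddMoments w)
    (hw0 : ∀ i, 1 ≤ i → ∀ s : ℝ, 0 ≤ s → 0 ≤ w i s)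
    (hwc : ∀ i, 1 ≤ i → ContinuousOn (w i) (Set.Ici (0 : ℝ)))
    (μ : ℕ → ℝ) (hμ : ∀ i, 1 ≤ i → 0 ≤ μ i)
    (m K : ℝ) (hm1 : 1 ≤ m) (hK0 : 0 ≤ K)
    (hK : ∀ i : ℕ, 1 ≤ i → μ i ≤ K * (i : ℝ) ^ m)
    (T : ℝ) (hT : 0 < T) :
    ContinuousOn (Gpf B al μ w) (Set.Icc (0:ℝ) T) ∧
    ContinuousOn (Gmf al μ w) (Set.Icc (0:ℝ) T) ∧
    ContinuousOn (Gdf B al μ w) (Set.Icc (0:ℝ) T) := by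
  obtain ⟨D, hD0, hPER⟩ := PER B hB al A l hA hl hsym hal hbd w hloc hw0 μ hμ m K hm1 hK0 hK T hT
  have hsub : Set.Icc (0:ℝ) T ⊆ Set.Ici (0:ℝ) := fun x hx => hx.1
  have hQc : ∀ p : ℕ × ℕ, ContinuousOn (fun s => Qf al w p s) (Set.Icc (0:ℝ) T) := by
    intro p
    apply ContinuousOn.mul
    apply ContinuousOn.mul continuousOn_const
    · exact (hwc (p.1 + 1) (by omega)).mono hsub
    · exact (hwc (p.2 + 1) (by omega)).mono hsub
  have hDIV : Summable (fun p : ℕ × ℕ => D * IV p) := summable_invsq_pair.mul_left D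
  have hGp : ContinuousOn (Gpf B al μ w) (Set.Icc (0:ℝ) T) := by
    have heq : Gpf B al μ w = fun s => (1/2) * ∑' p : ℕ × ℕ, SBf B μ p * Qf al w p s := rfl
    rw [heq]
    apply ContinuousOn.mul continuousOn_const
    apply continuousOn_tsum (u := fun p => D * IV p)
      (fun p => (continuousOn_const.mul (hQc p))) hDIV
    intro p x hx
    rw [Real.norm_eq_abs]
    exact (hPER x hx).2.2.2.2.2.2.2.2.2.2.2.1 p
  have hGm : ContinuousOn (Gmf al μ w) (Set.Icc (0:ℝ) T) := by
    have heq : Gmf al μ w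
        = fun s => (1/2) * ∑' p : ℕ × ℕ, (μ (p.1 + 1) + μ (p.2 + 1)) * Qf al w p s := rfl
    rw [heq]
    apply ContinuousOn.mul continuousOn_const
    apply continuousOn_tsum (u := fun p => D * IV p)
      (fun p => (continuousOn_const.mul (hQc p))) hDIV
    intro p x hx
    rw [Real.norm_eq_abs]
    exact (hPER x hx).2.2.2.2.2.2.2.2.2.2.2.2 p
  refine ⟨hGp, hGm, ?_⟩
  apply (hGp.sub hGm).congr
  intro x hx
  exact (hPER x hx).2.2.2.2.2.2.1

lemma CONT (B : ℕ → ℕ → ℕ → ℝ) (hB : HB B)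
    (al : ℕ → ℕ → ℝ) (A l : ℝ) (hA : 0 < A) (hl : 1 ≤ l)
    (hsym : ∀ i j, 1 ≤ i → 1 ≤ j → al i j = al j i)
    (hal : ∀ i j, 1 ≤ i → 1 ≤ j → 0 ≤ al i j)
    (hbd : ∀ i j, 1 ≤ i → 1 ≤ j → al i j ≤ A * l * ((i : ℝ) + (j : ℝ)))
    (w : ℕ → ℝ → ℝ) (hloc : LocBddMoments w)
    (hw0 : ∀ i, 1 ≤ i → ∀ s : ℝ, 0 ≤ s → 0 ≤ w i s)
    (hwc : ∀ i, 1 ≤ i → ContinuousOn (w i) (Set.Ici (0 : ℝ)))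
    (μ : ℕ → ℝ) (hμ : ∀ i, 1 ≤ i → 0 ≤ μ i)
    (m K : ℝ) (hm1 : 1 ≤ m) (hK0 : 0 ≤ K)
    (hK : ∀ i : ℕ, 1 ≤ i → μ i ≤ K * (i : ℝ) ^ m) :
    ContinuousOn (Gdf B al μ w) (Set.Ici (0:ℝ)) := by
  intro x hx
  have hx0 : (0:ℝ) ≤ x := hx
  have hT : (0:ℝ) < x + 1 := by linarith
  have hC := (CONT2 B hB al A l hA hl hsym hal hbd w hloc hw0 hwc μ hμ m K hm1 hK0 hK
    (x + 1) hT).2.2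
  have hmem : Set.Icc (0:ℝ) (x + 1) ∈ nhdsWithin x (Set.Ici (0:ℝ)) := by
    apply mem_nhdsWithin.2
    refine ⟨Set.Iio (x + 1), isOpen_Iio, by simp, ?_⟩
    rintro y ⟨hy1, hy2⟩
    exact ⟨hy2, le_of_lt hy1⟩
  exact (hC x ⟨hx0, by linarith⟩).mono_of_mem_nhdsWithin hmem

lemma gain_nonneg (B : ℕ → ℕ → ℕ → ℝ) (hB : HB B)
    (al : ℕ → ℕ → ℝ) (hal : ∀ i j, 1 ≤ i → 1 ≤ j → 0 ≤ al i j)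
    (w : ℕ → ℝ → ℝ) (hw0 : ∀ i, 1 ≤ i → ∀ s : ℝ, 0 ≤ s → 0 ≤ w i s)
    (i0 : ℕ) (hi0 : 1 ≤ i0) (τ : ℝ) (hτ : 0 ≤ τ) : 0 ≤ gainT al B w i0 τ := by
  unfold gainT
  apply mul_nonneg (by norm_num)
  apply tsum_nonneg
  intro n
  apply Finset.sum_nonneg
  intro k hk
  simp only [Finset.mem_Ico] at hk
  have hj : 1 ≤ i0 + 1 + n - k := by omega
  exact mul_nonneg (mul_nonneg (mul_nonneg ((hB _ _ hj hk.1).1 i0)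
    (hal _ _ hj hk.1)) (hw0 _ hj τ hτ)) (hw0 _ hk.1 τ hτ)

lemma loss_nonneg (al : ℕ → ℕ → ℝ) (hal : ∀ i j, 1 ≤ i → 1 ≤ j → 0 ≤ al i j)
    (w : ℕ → ℝ → ℝ) (hw0 : ∀ i, 1 ≤ i → ∀ s : ℝ, 0 ≤ s → 0 ≤ w i s)
    (i0 : ℕ) (hi0 : 1 ≤ i0) (τ : ℝ) (hτ : 0 ≤ τ) : 0 ≤ lossT al w i0 τ := by
  unfold lossT
  apply tsum_nonneg
  intro n
  exact mul_nonneg (mul_nonneg (hal _ _ hi0 (by omega)) (hw0 _ hi0 τ hτ))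
    (hw0 _ (by omega) τ hτ)

lemma REP (B : ℕ → ℕ → ℕ → ℝ) (hB : HB B)
    (al : ℕ → ℕ → ℝ) (A l : ℝ) (hA : 0 < A) (hl : 1 ≤ l)
    (hsym : ∀ i j, 1 ≤ i → 1 ≤ j → al i j = al j i)
    (hal : ∀ i j, 1 ≤ i → 1 ≤ j → 0 ≤ al i j)
    (hbd : ∀ i j, 1 ≤ i → 1 ≤ j → al i j ≤ A * l * ((i : ℝ) + (j : ℝ)))
    (win : ℕ → ℝ) (w : ℕ → ℝ → ℝ)
    (hsol : IsSol al B win w) (hloc : LocBddMoments w)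
    (μ : ℕ → ℝ) (hμ : ∀ i, 1 ≤ i → 0 ≤ μ i)
    (m K : ℝ) (hm1 : 1 ≤ m) (hK0 : 0 ≤ K)
    (hK : ∀ i : ℕ, 1 ≤ i → μ i ≤ K * (i : ℝ) ^ m) :
    ∀ s : ℝ, 0 ≤ s →
      (∑' n : ℕ, μ (n + 1) * w (n + 1) s)
        = (∑' n : ℕ, μ (n + 1) * w (n + 1) 0)
          + ∫ τ in Set.Ioc (0:ℝ) s, Gdf B al μ w τ := by
  obtain ⟨hw0, hwc, hwi, hwint⟩ := hsol
  intro s hs0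
  rcases eq_or_lt_of_le hs0 with hseq | hslt
  · rw [← hseq]
    simp [Set.Ioc_self]
  obtain ⟨D, hD0, hPER⟩ :=
    PER B hB al A l hA hl hsym hal hbd w hloc hw0 μ hμ m K hm1 hK0 hK s hslt
  obtain ⟨hGpc, hGmc, hGdc⟩ :=
    CONT2 B hB al A l hA hl hsym hal hbd w hloc hw0 hwc μ hμ m K hm1 hK0 hK s hslt
  have hIGp : IntegrableOn (Gpf B al μ w) (Set.Ioc 0 s) :=
    (hGpc.integrableOn_Icc).mono_set Set.Ioc_subset_Icc_self
  have hIGm : IntegrableOn (Gmf al μ w) (Set.Ioc 0 s) :=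
    (hGmc.integrableOn_Icc).mono_set Set.Ioc_subset_Icc_self
  have hmeasI : MeasurableSet (Set.Ioc (0:ℝ) s) := measurableSet_Ioc
  have hint := fun n : ℕ => hwint (n + 1) (by omega) s hslt
  have hgnn : ∀ (n : ℕ) (τ : ℝ), τ ∈ Set.Ioc (0:ℝ) s → 0 ≤ gainT al B w (n + 1) τ :=
    fun n τ hτ => gain_nonneg B hB al hal w hw0 (n + 1) (by omega) τ (le_of_lt hτ.1)
  have hlnn : ∀ (n : ℕ) (τ : ℝ), τ ∈ Set.Ioc (0:ℝ) s → 0 ≤ lossT al w (n + 1) τ :=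
    fun n τ hτ => loss_nonneg al hal w hw0 (n + 1) (by omega) τ (le_of_lt hτ.1)
  have hμgi : ∀ n : ℕ, IntegrableOn
      (fun τ => μ (n + 1) * gainT al B w (n + 1) τ) (Set.Ioc 0 s) :=
    fun n => ((hint n).2.1.const_mul _)
  have hμli : ∀ n : ℕ, IntegrableOn
      (fun τ => μ (n + 1) * lossT al w (n + 1) τ) (Set.Ioc 0 s) :=
    fun n => ((hint n).1.const_mul _)
  have heq2 : ∀ n : ℕ, μ (n + 1) * w (n + 1) s
      = μ (n + 1) * w (n + 1) 0
        + ((∫ τ in Set.Ioc (0:ℝ) s, μ (n + 1) * gainT al B w (n + 1) τ)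
          - (∫ τ in Set.Ioc (0:ℝ) s, μ (n + 1) * lossT al w (n + 1) τ)) := by
    intro n
    have e1 : ∫ τ in Set.Ioc (0:ℝ) s, (gainT al B w (n + 1) τ - lossT al w (n + 1) τ)
        = (∫ τ in Set.Ioc (0:ℝ) s, gainT al B w (n + 1) τ)
          - ∫ τ in Set.Ioc (0:ℝ) s, lossT al w (n + 1) τ :=
      integral_sub (hint n).2.1 (hint n).1
    have e2 : ∫ τ in Set.Ioc (0:ℝ) s, μ (n + 1) * gainT al B w (n + 1) τ
        = μ (n + 1) * ∫ τ in Set.Ioc (0:ℝ) s, gainT al B w (n + 1) τ :=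
      integral_const_mul _ _
    have e3 : ∫ τ in Set.Ioc (0:ℝ) s, μ (n + 1) * lossT al w (n + 1) τ
        = μ (n + 1) * ∫ τ in Set.Ioc (0:ℝ) s, lossT al w (n + 1) τ :=
      integral_const_mul _ _
    rw [(hint n).2.2, e1, e2, e3, ← hwi (n + 1) (by omega)]
    ring
  have hSg : Summable (fun n : ℕ =>
      ∫ τ in Set.Ioc (0:ℝ) s, μ (n + 1) * gainT al B w (n + 1) τ) := by
    apply summable_of_sum_range_le (c := ∫ τ in Set.Ioc (0:ℝ) s, Gpf B al μ w τ)
    · intro n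
      exact setIntegral_nonneg hmeasI
        (fun τ hτ => mul_nonneg (hμ _ (by omega)) (hgnn n τ hτ))
    · intro N
      rw [← integral_finset_sum _ (fun i _ => hμgi i)]
      apply setIntegral_mono_on (integrable_finset_sum _ (fun i _ => hμgi i)) hIGp hmeasI
      intro τ hτ
      obtain ⟨c1, c2, c3, c4, c5, c6, c7, c8, c9, c10, c11, c12, c13⟩ :=
        hPER τ ⟨le_of_lt hτ.1, hτ.2⟩
      calc ∑ i ∈ Finset.range N, μ (i + 1) * gainT al B w (i + 1) τ
          ≤ ∑' n : ℕ, μ (n + 1) * gainT al B w (n + 1) τ :=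
            Summable.sum_le_tsum _ (fun i _ => mul_nonneg (hμ _ (by omega)) (hgnn i τ hτ)) c3
        _ = Gpf B al μ w τ := c4
  have hSl : Summable (fun n : ℕ =>
      ∫ τ in Set.Ioc (0:ℝ) s, μ (n + 1) * lossT al w (n + 1) τ) := by
    apply summable_of_sum_range_le (c := ∫ τ in Set.Ioc (0:ℝ) s, Gmf al μ w τ)
    · intro n
      exact setIntegral_nonneg hmeasI
        (fun τ hτ => mul_nonneg (hμ _ (by omega)) (hlnn n τ hτ))
    · intro N
      rw [← integral_finset_sum _ (fun i _ => hμli i)]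
      apply setIntegral_mono_on (integrable_finset_sum _ (fun i _ => hμli i)) hIGm hmeasI
      intro τ hτ
      obtain ⟨c1, c2, c3, c4, c5, c6, c7, c8, c9, c10, c11, c12, c13⟩ :=
        hPER τ ⟨le_of_lt hτ.1, hτ.2⟩
      calc ∑ i ∈ Finset.range N, μ (i + 1) * lossT al w (i + 1) τ
          ≤ ∑' n : ℕ, μ (n + 1) * lossT al w (n + 1) τ :=
            Summable.sum_le_tsum _ (fun i _ => mul_nonneg (hμ _ (by omega)) (hlnn i τ hτ)) c5
        _ = Gmf al μ w τ := c6
  have hfg : ∀ n : ℕ, AEStronglyMeasurable (fun τ => μ (n + 1) * gainT al B w (n + 1) τ)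
      (volume.restrict (Set.Ioc 0 s)) := fun n => (hμgi n).aestronglyMeasurable
  have hfl : ∀ n : ℕ, AEStronglyMeasurable (fun τ => μ (n + 1) * lossT al w (n + 1) τ)
      (volume.restrict (Set.Ioc 0 s)) := fun n => (hμli n).aestronglyMeasurable
  have hvol : (volume.restrict (Set.Ioc (0:ℝ) s)) Set.univ ≠ ⊤ := by
    rw [Measure.restrict_apply_univ, Real.volume_Ioc]
    exact ENNReal.ofReal_ne_top
  have hbnd : ∀ (F : ℕ → ℝ → ℝ)
      (hFnn : ∀ (n : ℕ) (τ : ℝ), τ ∈ Set.Ioc (0:ℝ) s → 0 ≤ F n τ)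
      (hFms : ∀ n : ℕ, AEStronglyMeasurable (F n) (volume.restrict (Set.Ioc 0 s)))
      (G : ℝ → ℝ)
      (hFG : ∀ τ ∈ Set.Ioc (0:ℝ) s, Summable (fun n => F n τ) ∧ (∑' n, F n τ) = G τ ∧ G τ ≤ D),
      ∑' n : ℕ, ∫⁻ τ in Set.Ioc (0:ℝ) s, (‖F n τ‖₊ : ENNReal) ≠ ⊤ := by
    intro F hFnn hFms G hFG
    rw [← MeasureTheory.lintegral_tsum (fun n => (hFms n).aemeasurable.nnnorm.coe_nnreal_ennreal)]
    have hb : ∫⁻ τ in Set.Ioc (0:ℝ) s, (∑' n : ℕ, (‖F n τ‖₊ : ENNReal))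
        ≤ ∫⁻ _ in Set.Ioc (0:ℝ) s, ENNReal.ofReal D := by
      apply lintegral_mono_ae
      filter_upwards [ae_restrict_mem hmeasI] with τ hτ
      obtain ⟨hsumF, hGF, hGD⟩ := hFG τ hτ
      have e : ∀ n : ℕ, (‖F n τ‖₊ : ENNReal) = ENNReal.ofReal (F n τ) :=
        fun n => Real.enorm_eq_ofReal (hFnn n τ hτ)
      rw [tsum_congr e,
        ← ENNReal.ofReal_tsum_of_nonneg (fun n => hFnn n τ hτ) hsumF, hGF]
      exact ENNReal.ofReal_le_ofReal hGD
    rw [MeasureTheory.setLIntegral_const] at hb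
    refine ne_top_of_le_ne_top ?_ hb
    rw [Real.volume_Ioc]
    exact ENNReal.mul_ne_top ENNReal.ofReal_ne_top ENNReal.ofReal_ne_top
  have key1 : ∫ τ in Set.Ioc (0:ℝ) s, Gpf B al μ w τ
      = ∑' n : ℕ, ∫ τ in Set.Ioc (0:ℝ) s, μ (n + 1) * gainT al B w (n + 1) τ := by
    rw [← MeasureTheory.integral_tsum hfg (hbnd _ (fun n τ hτ =>
      mul_nonneg (hμ _ (by omega)) (hgnn n τ hτ)) hfg (Gpf B al μ w) (fun τ hτ => by
        obtain ⟨c1, c2, c3, c4, c5, c6, c7, c8, c9, c10, c11, c12, c13⟩ :=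
          hPER τ ⟨le_of_lt hτ.1, hτ.2⟩
        exact ⟨c3, c4, c9⟩))]
    apply setIntegral_congr_fun hmeasI
    intro τ hτ
    obtain ⟨c1, c2, c3, c4, c5, c6, c7, c8, c9, c10, c11, c12, c13⟩ :=
      hPER τ ⟨le_of_lt hτ.1, hτ.2⟩
    exact c4.symm
  have key2 : ∫ τ in Set.Ioc (0:ℝ) s, Gmf al μ w τ
      = ∑' n : ℕ, ∫ τ in Set.Ioc (0:ℝ) s, μ (n + 1) * lossT al w (n + 1) τ := by
    rw [← MeasureTheory.integral_tsum hfl (hbnd _ (fun n τ hτ =>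
      mul_nonneg (hμ _ (by omega)) (hlnn n τ hτ)) hfl (Gmf al μ w) (fun τ hτ => by
        obtain ⟨c1, c2, c3, c4, c5, c6, c7, c8, c9, c10, c11, c12, c13⟩ :=
          hPER τ ⟨le_of_lt hτ.1, hτ.2⟩
        exact ⟨c5, c6, c11⟩))]
    apply setIntegral_congr_fun hmeasI
    intro τ hτ
    obtain ⟨c1, c2, c3, c4, c5, c6, c7, c8, c9, c10, c11, c12, c13⟩ :=
      hPER τ ⟨le_of_lt hτ.1, hτ.2⟩
    exact c6.symm
  have hS0 : Summable (fun n : ℕ => μ (n + 1) * w (n + 1) 0) :=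
    (hPER 0 ⟨le_rfl, le_of_lt hslt⟩).1
  calc ∑' n : ℕ, μ (n + 1) * w (n + 1) s
      = ∑' n : ℕ, (μ (n + 1) * w (n + 1) 0
          + ((∫ τ in Set.Ioc (0:ℝ) s, μ (n + 1) * gainT al B w (n + 1) τ)
            - (∫ τ in Set.Ioc (0:ℝ) s, μ (n + 1) * lossT al w (n + 1) τ))) :=
        tsum_congr heq2
    _ = (∑' n : ℕ, μ (n + 1) * w (n + 1) 0)
        + ((∑' n : ℕ, ∫ τ in Set.Ioc (0:ℝ) s, μ (n + 1) * gainT al B w (n + 1) τ)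
          - (∑' n : ℕ, ∫ τ in Set.Ioc (0:ℝ) s, μ (n + 1) * lossT al w (n + 1) τ)) := by
        rw [Summable.tsum_add hS0 (hSg.sub hSl), Summable.tsum_sub hSg hSl]
    _ = (∑' n : ℕ, μ (n + 1) * w (n + 1) 0)
        + ((∫ τ in Set.Ioc (0:ℝ) s, Gpf B al μ w τ)
          - ∫ τ in Set.Ioc (0:ℝ) s, Gmf al μ w τ) := by rw [key1, key2]
    _ = (∑' n : ℕ, μ (n + 1) * w (n + 1) 0)
        + ∫ τ in Set.Ioc (0:ℝ) s, (Gpf B al μ w τ - Gmf al μ w τ) := by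
        rw [integral_sub hIGp hIGm]
    _ = (∑' n : ℕ, μ (n + 1) * w (n + 1) 0)
        + ∫ τ in Set.Ioc (0:ℝ) s, Gdf B al μ w τ := by
        congr 1
        apply setIntegral_congr_fun hmeasI
        intro τ hτ
        obtain ⟨c1, c2, c3, c4, c5, c6, c7, c8, c9, c10, c11, c12, c13⟩ :=
          hPER τ ⟨le_of_lt hτ.1, hτ.2⟩
        exact c7.symm

end Stmt9Aux

/-- Lemma 3.2: the generalized moment identity for solutions of the truncated system. -/
theorem stmt9 (B : ℕ → ℕ → ℕ → ℝ) (hB : HB B)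
    (al : ℕ → ℕ → ℝ) (A l : ℝ) (hA : 0 < A) (hl : 1 ≤ l)
    (hsym : ∀ i j, 1 ≤ i → 1 ≤ j → al i j = al j i)
    (hnn : ∀ i j, 1 ≤ i → 1 ≤ j → 0 ≤ al i j)
    (hbd : ∀ i j, 1 ≤ i → 1 ≤ j → al i j ≤ A * l * ((i : ℝ) + (j : ℝ)))
    (win : ℕ → ℝ) (w : ℕ → ℝ → ℝ)
    (hsol : IsSol al B win w) (hmc : MassConserving win w) (hloc : LocBddMoments w)
    (μ : ℕ → ℝ) (hμ : ∀ i, 1 ≤ i → 0 ≤ μ i)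
    (hgrow : ∃ m : ℝ, 1 ≤ m ∧ ∃ K : ℝ, ∀ i : ℕ, 1 ≤ i → μ i ≤ K * (i : ℝ) ^ m) :
    ∀ t : ℝ, 0 ≤ t →
      Summable (fun n : ℕ => μ (n + 1) * w (n + 1) t) ∧
      Summable (fun p : ℕ × ℕ =>
        |((∑ i ∈ Finset.Ico 1 (p.1 + 1 + (p.2 + 1)), μ i * B (p.1 + 1) (p.2 + 1) i) -
            μ (p.1 + 1) - μ (p.2 + 1)) * al (p.1 + 1) (p.2 + 1) *
          w (p.1 + 1) t * w (p.2 + 1) t|) ∧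
      HasDerivWithinAt (fun s : ℝ => ∑' n : ℕ, μ (n + 1) * w (n + 1) s)
        ((1 / 2) * ∑' p : ℕ × ℕ,
          ((∑ i ∈ Finset.Ico 1 (p.1 + 1 + (p.2 + 1)), μ i * B (p.1 + 1) (p.2 + 1) i) -
              μ (p.1 + 1) - μ (p.2 + 1)) * al (p.1 + 1) (p.2 + 1) *
            w (p.1 + 1) t * w (p.2 + 1) t)
        (Set.Ici 0) t := by
  obtain ⟨m, hm1, K, hK⟩ := hgrow
  have hK0 : 0 ≤ K := by
    have h1 := hK 1 le_rfl
    have h2 := hμ 1 le_rfl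
    rw [Nat.cast_one, Real.one_rpow, mul_one] at h1
    linarith
  intro t ht
  have hT : (0:ℝ) < t + 1 := by linarith
  obtain ⟨D, hD0, hPER⟩ := Stmt9Aux.PER B hB al A l hA hl hsym hnn hbd w hloc hsol.1
    μ hμ m K hm1 hK0 hK (t + 1) hT
  obtain ⟨c1, c2, c3, c4, c5, c6, c7, c8, c9, c10, c11, c12, c13⟩ :=
    hPER t ⟨ht, by linarith⟩
  refine ⟨c1, c2, ?_⟩
  show HasDerivWithinAt (fun s : ℝ => ∑' n : ℕ, μ (n + 1) * w (n + 1) s)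
    (Stmt9Aux.Gdf B al μ w t) (Set.Ici 0) t
  have hrep := Stmt9Aux.REP B hB al A l hA hl hsym hnn hbd win w hsol hloc
    μ hμ m K hm1 hK0 hK
  have hGc : ContinuousOn (Stmt9Aux.Gdf B al μ w) (Set.Ici (0:ℝ)) :=
    Stmt9Aux.CONT B hB al A l hA hl hsym hnn hbd w hloc hsol.1 hsol.2.1
      μ hμ m K hm1 hK0 hK
  have hΦeq : ∀ s ∈ Set.Ici (0:ℝ),
      (∑' n : ℕ, μ (n + 1) * w (n + 1) s)
        = (∑' n : ℕ, μ (n + 1) * w (n + 1) 0)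
          + ∫ x in (0:ℝ)..s, Stmt9Aux.Gdf B al μ w x := by
    intro s hs
    rw [intervalIntegral.integral_of_le hs]
    exact hrep s hs
  have hii : IntervalIntegrable (Stmt9Aux.Gdf B al μ w) volume 0 t := by
    apply ContinuousOn.intervalIntegrable
    rw [Set.uIcc_of_le ht]
    exact hGc.mono (fun x hx => hx.1)
  have hd : HasDerivWithinAt
      (fun u => (∑' n : ℕ, μ (n + 1) * w (n + 1) 0)
        + ∫ x in (0:ℝ)..u, Stmt9Aux.Gdf B al μ w x)
      (Stmt9Aux.Gdf B al μ w t) (Set.Ici 0) t := by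
    apply HasDerivWithinAt.const_add
    rcases eq_or_lt_of_le ht with h0 | h0
    · -- t = 0
      subst h0
      have hsub : Set.Ioi (0:ℝ) ⊆ Set.Ici (0:ℝ) := Set.Ioi_subset_Ici le_rfl
      exact intervalIntegral.integral_hasDerivWithinAt_right
        (s := Set.Ici (0:ℝ)) (t := Set.Ioi (0:ℝ)) hii
        ((hGc.mono hsub).stronglyMeasurableAtFilter_nhdsWithin measurableSet_Ioi 0)
        ((hGc 0 Set.self_mem_Ici).mono hsub)
    · -- 0 < t
      have hsub : Set.Ioi (0:ℝ) ⊆ Set.Ici (0:ℝ) := Set.Ioi_subset_Ici le_rfl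
      have hmeas : StronglyMeasurableAtFilter (Stmt9Aux.Gdf B al μ w) (nhds t) volume :=
        ContinuousOn.stronglyMeasurableAtFilter isOpen_Ioi (hGc.mono hsub) t h0
      have hCA : ContinuousAt (Stmt9Aux.Gdf B al μ w) t :=
        (hGc.mono hsub).continuousAt (IsOpen.mem_nhds isOpen_Ioi h0)
      exact (intervalIntegral.integral_hasDerivAt_right hii hmeas hCA).hasDerivWithinAt
  exact hd.congr (fun y hy => hΦeq y hy) (hΦeq t ht)
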